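/- If D ⊆ V is a coherent set of desirable options, then K_D = {A finite subset of V : A ∩ D ≠ ∅} is a coherent set of desirable option sets, i.e., K_D satisfies: (K0) A ∈ K_D implies A \ {0} ∈ K_D; (K1) {0} ∉ K_D; (K2) {u} ∈ K_D for all u ∈ V with u > 0; (K3) if A1, A2 ∈ K_D and for each u ∈ A1, v ∈ A2 we choose λ_{u,v}, μ_{u,v} ≥ 0 with λ_{u,v} + μ_{u,v} > 0, then {λ_{u,v} u + μ_{u,v} v : u ∈ A1, v ∈ A2} ∈ K_D; (K4) if A1 ∈ K_D and A1 ⊆ A2 ∈ Q then A2 ∈ K_D. -/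

import Mathlib

/-- Axiom K0: removal of the zero option. -/
def AxK0 {V : Type*} [AddCommGroup V] [Module ℝ V] (K : Set (Set V)) : Prop :=
  ∀ A ∈ K, A \ {0} ∈ K

/-- Axiom K1: the singleton of zero is not a desirable option set. -/
def AxK1 {V : Type*} [AddCommGroup V] [Module ℝ V] (K : Set (Set V)) : Prop :=
  ({0} : Set V) ∉ K

/-- Axiom K2: singletons of (background-)positive options are desirable option sets. -/
def AxK2 {V : Type*} [AddCommGroup V] [Module ℝ V] (Vpos : Set V) (K : Set (Set V)) : Prop :=
  ∀ u ∈ Vpos, ({u} : Set V) ∈ K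

/-- Axiom K3: closure under elementwise positive combinations of two members. -/
def AxK3 {V : Type*} [AddCommGroup V] [Module ℝ V] (K : Set (Set V)) : Prop :=
  ∀ A1 ∈ K, ∀ A2 ∈ K, ∀ l m : V → V → ℝ,
    (∀ u ∈ A1, ∀ v ∈ A2, 0 ≤ l u v ∧ 0 ≤ m u v ∧ 0 < l u v + m u v) →
    {w : V | ∃ u ∈ A1, ∃ v ∈ A2, w = l u v • u + m u v • v} ∈ K

/-- Axiom K4: upward closure under inclusion (within finite option sets). -/
def AxK4 {V : Type*} [AddCommGroup V] [Module ℝ V] (K : Set (Set V)) : Prop :=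
  ∀ A1 ∈ K, ∀ A2 : Set V, A2.Finite → A1 ⊆ A2 → A2 ∈ K

/-- Coherence of a set of desirable option sets (a subset of the finite option sets). -/
def CoherentK {V : Type*} [AddCommGroup V] [Module ℝ V] (Vpos : Set V)
    (K : Set (Set V)) : Prop :=
  (∀ A ∈ K, A.Finite) ∧ AxK0 K ∧ AxK1 K ∧ AxK2 Vpos K ∧ AxK3 K ∧ AxK4 K

/-- Coherence of a set of desirable options. -/
def CoherentD {V : Type*} [AddCommGroup V] [Module ℝ V] (Vpos D : Set V) : Prop :=
  (0 : V) ∉ D ∧ Vpos ⊆ D ∧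
  ∀ u ∈ D, ∀ v ∈ D, ∀ l m : ℝ, 0 ≤ l → 0 ≤ m → 0 < l + m → l • u + m • v ∈ D

/-- `K_D`: the binary set of desirable option sets generated by `D`. -/
def KD {V : Type*} [AddCommGroup V] [Module ℝ V] (D : Set V) : Set (Set V) :=
  {A | A.Finite ∧ (A ∩ D).Nonempty}

/-- `D_K`: the set of options whose singletons belong to `K`. -/
def DK {V : Type*} [AddCommGroup V] [Module ℝ V] (K : Set (Set V)) : Set V :=
  {u | ({u} : Set V) ∈ K}

/-- A set of desirable option sets is binary if it is determined by singleton assessments. -/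
def BinaryK {V : Type*} [AddCommGroup V] [Module ℝ V] (K : Set (Set V)) : Prop :=
  ∀ A : Set V, A.Finite → (A ∈ K ↔ ∃ u ∈ A, ({u} : Set V) ∈ K)

/-- `posi S`: all finite positive linear combinations of elements of `S`. -/
def Posi {V : Type*} [AddCommGroup V] [Module ℝ V] (S : Set V) : Set V :=
  {w | ∃ n : ℕ, 0 < n ∧ ∃ (l : Fin n → ℝ) (u : Fin n → V),
    (∀ k, 0 < l k) ∧ (∀ k, u k ∈ S) ∧ w = ∑ k, l k • u k}

/-- Total set of desirable options. -/
def TotalD {V : Type*} [AddCommGroup V] [Module ℝ V] (Vpos D : Set V) : Prop :=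
  CoherentD Vpos D ∧ ∀ u : V, u ≠ 0 → u ∈ D ∨ -u ∈ D

/-- Total set of desirable option sets. -/
def TotalK {V : Type*} [AddCommGroup V] [Module ℝ V] (Vpos : Set V)
    (K : Set (Set V)) : Prop :=
  CoherentK Vpos K ∧ ∀ u : V, u ≠ 0 → ({u, -u} : Set V) ∈ K

/-- Mixing set of desirable options. -/
def MixingD {V : Type*} [AddCommGroup V] [Module ℝ V] (Vpos D : Set V) : Prop :=
  CoherentD Vpos D ∧ ∀ A : Set V, A.Finite → (Posi A ∩ D).Nonempty → (A ∩ D).Nonempty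

/-- Mixing set of desirable option sets. -/
def MixingK {V : Type*} [AddCommGroup V] [Module ℝ V] (Vpos : Set V)
    (K : Set (Set V)) : Prop :=
  CoherentK Vpos K ∧
    ∀ A B : Set V, A.Finite → B ∈ K → A ⊆ B → B ⊆ Posi A → A ∈ K

/-- `V_{≤0}`: the non-positive options (zero together with the strictly negative options). -/
def Vneg {V : Type*} [AddCommGroup V] [Module ℝ V] (Vpos : Set V) : Set V :=
  {u | u = 0 ∨ -u ∈ Vpos}

/-- The operator `RN`, adding smaller option sets by removing non-positive options. -/
def RN {V : Type*} [AddCommGroup V] [Module ℝ V] (Vpos : Set V)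
    (K : Set (Set V)) : Set (Set V) :=
  {A | A.Finite ∧ ∃ B ∈ K, B \ Vneg Vpos ⊆ A ∧ A ⊆ B}

theorem stmt2 {V : Type*} [AddCommGroup V] [Module ℝ V]
    (Vpos D : Set V) (hD : CoherentD Vpos D) :
    CoherentK Vpos (KD D) := by
  obtain ⟨h0, hpos, hcomb⟩ := hD
  refine ⟨fun A hA => hA.1, ?_, ?_, ?_, ?_, ?_⟩
  · -- K0
    rintro A ⟨hAf, x, hxA, hxD⟩
    refine ⟨hAf.diff, x, ⟨⟨hxA, ?_⟩, hxD⟩⟩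
    simp only [Set.mem_singleton_iff]
    rintro rfl; exact h0 hxD
  · -- K1
    rintro ⟨-, x, hx, hxD⟩
    rw [Set.mem_singleton_iff] at hx
    subst hx; exact h0 hxD
  · -- K2
    intro u hu
    exact ⟨Set.finite_singleton u, u, rfl, hpos hu⟩
  · -- K3
    rintro A1 ⟨hA1f, u, huA, huD⟩ A2 ⟨hA2f, v, hvA, hvD⟩ l m hlm
    constructor
    · have : {w : V | ∃ u ∈ A1, ∃ v ∈ A2, w = l u v • u + m u v • v}
          ⊆ (fun p : V × V => l p.1 p.2 • p.1 + m p.1 p.2 • p.2) '' (A1 ×ˢ A2) := by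
        rintro w ⟨a, ha, b, hb, rfl⟩
        exact ⟨(a, b), ⟨ha, hb⟩, rfl⟩
      exact ((hA1f.prod hA2f).image _).subset this
    · obtain ⟨hl, hm, hs⟩ := hlm u huA v hvA
      exact ⟨l u v • u + m u v • v, ⟨u, huA, v, hvA, rfl⟩,
        hcomb u huD v hvD _ _ hl hm hs⟩
  · -- K4
    rintro A1 ⟨-, x, hxA, hxD⟩ A2 hA2f hsub
    exact ⟨hA2f, x, hsub hxA, hxD⟩
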